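/- Let Σ ⊆ A^ℤ be a subshift with language L = L(Σ), and let x, y ∈ Σ. Then (x, y) is in the chain relation of (Σ, σ) if and only if for every l ∈ ℕ there exists a chain of nonzero length in L from x_{[−l,l]} to y_{[−l,l]}. -/

import Mathlib

/-! Common definitions: labelled graphs, walks, follower sets, the linking
relation, subshifts over `ℤ → A`, chains, and attractors. -/

structure LGraph (A : Type) where
  V : Type
  E : Type
  [finV : Finite V]
  [finE : Finite E]
  s : E → V
  t : E → V
  lab : E → A

attribute [instance] LGraph.finV LGraph.finE

namespace LGraph

variable {A : Type}

/-- `Walk G u v es` : the list of edges `es` forms a walk from `u` to `v`. -/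
inductive Walk (G : LGraph A) : G.V → G.V → List G.E → Prop
  | nil (v : G.V) : Walk G v v []
  | cons {w : G.V} {es : List G.E} (e : G.E) (h : Walk G (G.t e) w es) :
      Walk G (G.s e) w (e :: es)

/-- There is an edge from `u` to `v`. -/
def EdgeRel (G : LGraph A) (u v : G.V) : Prop := ∃ e : G.E, G.s e = u ∧ G.t e = v

/-- `v` is reachable from `u` by a directed walk. -/
def Reach (G : LGraph A) : G.V → G.V → Prop := Relation.ReflTransGen G.EdgeRel

/-- `u` and `v` lie in the same strongly connected component. -/
def SameComp (G : LGraph A) (u v : G.V) : Prop := G.Reach u v ∧ G.Reach v u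

/-- The number of strongly connected components of `G`. -/
noncomputable def numComponents (G : LGraph A) : ℕ :=
  Nat.card {K : Set G.V // ∃ v : G.V, K = {u : G.V | G.SameComp v u}}

/-- The restricted follower set of `v` : words labelling walks starting at `v`
that stay inside the strongly connected component of `v`. -/
def FollowR (G : LGraph A) (v : G.V) : Set (List A) :=
  {w | ∃ (u : G.V) (es : List G.E), G.Walk v u es ∧ es.map G.lab = w ∧
        ∀ e ∈ es, G.SameComp v (G.s e) ∧ G.SameComp v (G.t e)}

/-- Two vertices are linked iff their restricted follower sets have infinite
intersection. -/
def Linked (G : LGraph A) (u v : G.V) : Prop := (G.FollowR u ∩ G.FollowR v).Infinite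

/-- `≈` : the reflexive-transitive closure of the linked relation. -/
def Approx (G : LGraph A) : G.V → G.V → Prop := Relation.ReflTransGen G.Linked

/-- One step in the linking graph `G/≈` (lifted to `G`): either an edge of `G`
or a jump between linked vertices. -/
def GenStep (G : LGraph A) (u v : G.V) : Prop := G.EdgeRel u v ∨ G.Linked u v

/-- Reachability in the linking graph `G/≈`, expressed on vertices of `G`. -/
def GenReach (G : LGraph A) : G.V → G.V → Prop := Relation.ReflTransGen G.GenStep

/-- The language of `G` : words labelling finite walks in `G`. -/
def Lang (G : LGraph A) : Set (List A) :=
  {w | ∃ (u v : G.V) (es : List G.E), G.Walk u v es ∧ es.map G.lab = w}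

/-- `w` has a presentation in the subgraph of `G` induced by the vertex set `S`. -/
def PresIn (G : LGraph A) (S : Set G.V) (w : List A) : Prop :=
  ∃ (u v : G.V) (es : List G.E), G.Walk u v es ∧ es.map G.lab = w ∧
    u ∈ S ∧ v ∈ S ∧ ∀ e ∈ es, G.s e ∈ S ∧ G.t e ∈ S

/-- A presentation of the first `n` letters of `w`, with explicit vertex
sequence `v` and edge sequence `e`. -/
def PresFun (G : LGraph A) (n : ℕ) (w : ℕ → A) (v : ℕ → G.V) (e : ℕ → G.E) : Prop :=
  ∀ i < n, G.s (e i) = v i ∧ G.t (e i) = v (i + 1) ∧ G.lab (e i) = w i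

/-- `S` is a union of `≈`-equivalence classes, i.e. `S = π⁻¹(π(S))` for the
projection `π : G → G/≈`. -/
def SaturatedSet (G : LGraph A) (S : Set G.V) : Prop :=
  ∀ u v : G.V, G.Approx u v → (u ∈ S ↔ v ∈ S)

/-- No edge leaves `S` : together with saturation this says that the image of
`S` in `G/≈` is a terminal subgraph. -/
def ForwardClosed (G : LGraph A) (S : Set G.V) : Prop :=
  ∀ e : G.E, G.s e ∈ S → G.t e ∈ S

/-- Every vertex has an ingoing and an outgoing edge. -/
def Essential (G : LGraph A) : Prop :=
  ∀ v : G.V, (∃ e : G.E, G.t e = v) ∧ (∃ e : G.E, G.s e = v)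

/-- A biinfinite presentation of `x` (vertex sequence `v`, edge sequence `e`)
staying in the vertex set `S`. -/
def BiPresIn (G : LGraph A) (S : Set G.V) (x : ℤ → A) (v : ℤ → G.V) (e : ℤ → G.E) : Prop :=
  ∀ i : ℤ, G.s (e i) = v i ∧ G.t (e i) = v (i + 1) ∧ G.lab (e i) = x i ∧ v i ∈ S

/-- The subshift of biinfinite label sequences of biinfinite walks of `G`
staying in `S`. -/
def SigmaIn (G : LGraph A) (S : Set G.V) : Set (ℤ → A) :=
  {x | ∃ v e, G.BiPresIn S x v e}

/-- The sofic subshift `Σ(G)`. -/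
def Sigma' (G : LGraph A) : Set (ℤ → A) := G.SigmaIn Set.univ

/-- The linking graph `G/≈` is strongly connected. -/
def StronglyConnectedQuot (G : LGraph A) : Prop := ∀ u v : G.V, G.GenReach u v

/-- The linking graph `G/≈` is periodic : its vertices can be partitioned into
`n > 1` classes (indexed by `ZMod n`, each a union of `≈`-classes) so that every
edge advances the class index by one. -/
def PeriodicQuot (G : LGraph A) : Prop :=
  ∃ n : ℕ, 1 < n ∧ ∃ c : G.V → ZMod n,
    (∀ u v : G.V, G.Approx u v → c u = c v) ∧ ∀ e : G.E, c (G.t e) = c (G.s e) + 1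

/-- The label product `G * H`. -/
def labelProduct (G H : LGraph A) : LGraph A where
  V := G.V × H.V
  E := {p : G.E × H.E // G.lab p.1 = H.lab p.2}
  s := fun p => (G.s p.1.1, H.s p.1.2)
  t := fun p => (G.t p.1.1, H.t p.1.2)
  lab := fun p => G.lab p.1.1

end LGraph

section Subshift

variable {A : Type}

/-- The shift map `σ`. -/
def shift (x : ℤ → A) : ℤ → A := fun i => x (i + 1)

open Classical in
/-- The metric `ρ(x,y) = 2^{-n}` where `n` is minimal with `x_n ≠ y_n` or
`x_{-n} ≠ y_{-n}` (and `ρ(x,x) = 0`). -/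
noncomputable def rho (x y : ℤ → A) : ℝ :=
  if x = y then 0
  else (2 : ℝ) ^ (-((sInf {n : ℕ | ∃ i : ℤ, i.natAbs = n ∧ x i ≠ y i} : ℕ) : ℤ))

/-- Closedness with respect to the metric `rho`. -/
def RhoClosed (Sig : Set (ℤ → A)) : Prop :=
  ∀ x : ℤ → A, (∀ ε : ℝ, 0 < ε → ∃ y ∈ Sig, rho x y < ε) → x ∈ Sig

/-- A subshift : a closed, strongly shift-invariant subset of `A^ℤ`. -/
def IsSubshift (Sig : Set (ℤ → A)) : Prop :=
  RhoClosed Sig ∧ shift '' Sig = Sig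

/-- The language of the subshift `Sig` : all finite factors of its points. -/
def lang (Sig : Set (ℤ → A)) : Set (List A) :=
  {w | ∃ x ∈ Sig, ∃ k : ℤ, ∀ (i : ℕ) (h : i < w.length), w.get ⟨i, h⟩ = x (k + i)}

/-- The central factor `x_{[-l,l]}` of a biinfinite word. -/
def central (x : ℤ → A) (l : ℕ) : List A :=
  (List.range (2 * l + 1)).map fun i => x ((i : ℤ) - (l : ℤ))

/-- `ChainWord L u v n w` : `w` is a chain of length `n` from `u` to `v` in the
language `L` : `|w| = n + |u|`, `w` has prefix `u` and suffix `v`, and every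
factor of `w` of length at most `|u|` belongs to `L`. -/
def ChainWord (L : Set (List A)) (u v : List A) (n : ℕ) (w : List A) : Prop :=
  u.length = v.length ∧ w.length = n + u.length ∧
  w.take u.length = u ∧ w.drop n = v ∧
  ∀ z : List A, z <:+: w → z.length ≤ u.length → z ∈ L

/-- An `ε`-chain of length `n > 0` from `x` to `y` inside `Sig`. -/
def EpsChain (Sig : Set (ℤ → A)) (ε : ℝ) (n : ℕ) (x y : ℤ → A) : Prop :=
  0 < n ∧ ∃ z : ℕ → ℤ → A, z 0 = x ∧ z n = y ∧ (∀ i ≤ n, z i ∈ Sig) ∧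
    ∀ i < n, rho (shift (z i)) (z (i + 1)) < ε

/-- The chain relation of `(Sig, σ)`. -/
def ChainRel (Sig : Set (ℤ → A)) (x y : ℤ → A) : Prop :=
  ∀ ε : ℝ, 0 < ε → ∃ n : ℕ, EpsChain Sig ε n x y

/-- Chain-transitivity. -/
def ChainTransitive (Sig : Set (ℤ → A)) : Prop :=
  ∀ x ∈ Sig, ∀ y ∈ Sig, ChainRel Sig x y

/-- Chain-mixing. -/
def ChainMixing (Sig : Set (ℤ → A)) : Prop :=
  ∀ x ∈ Sig, ∀ y ∈ Sig, ∀ ε : ℝ, 0 < ε → ∃ k : ℕ, ∀ n, k < n → EpsChain Sig ε n x y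

/-- Distance from a point to a set, with respect to `rho`. -/
noncomputable def distTo (x : ℤ → A) (Y : Set (ℤ → A)) : ℝ := sInf (rho x '' Y)

/-- `Y` is an attractor of the dynamical system `(Sig, σ)`. -/
def IsAttractor (Sig Y : Set (ℤ → A)) : Prop :=
  Y.Nonempty ∧ Y ⊆ Sig ∧ RhoClosed Y ∧ shift '' Y = Y ∧
  (∀ ε : ℝ, 0 < ε → ∃ δ : ℝ, 0 < δ ∧ ∀ x ∈ Sig, distTo x Y < δ →
    ∀ n : ℕ, 0 < n → distTo (shift^[n] x) Y < ε) ∧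
  (∃ δ : ℝ, 0 < δ ∧ ∀ x ∈ Sig, distTo x Y < δ →
    Filter.Tendsto (fun n : ℕ => distTo (shift^[n] x) Y) Filter.atTop (nhds 0))

end Subshift

section Helpers

variable {A : Type}

lemma rho_le_of_agree (x y : ℤ → A) (l : ℕ)
    (h : ∀ j : ℤ, j.natAbs < l → x j = y j) : rho x y ≤ 2 ^ (-(l : ℤ)) := by
  unfold rho
  split
  · positivity
  · next hne =>
    obtain ⟨i, hi⟩ := Function.ne_iff.mp hne
    have hmem : sInf {n : ℕ | ∃ i : ℤ, i.natAbs = n ∧ x i ≠ y i}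
        ∈ {n : ℕ | ∃ i : ℤ, i.natAbs = n ∧ x i ≠ y i} :=
      Nat.sInf_mem ⟨i.natAbs, i, rfl, hi⟩
    obtain ⟨i', hi', hne2⟩ := hmem
    have hl : l ≤ sInf {n : ℕ | ∃ i : ℤ, i.natAbs = n ∧ x i ≠ y i} := by
      by_contra hc
      exact hne2 (h i' (by omega))
    exact zpow_le_zpow_right₀ one_le_two (by omega)

lemma agree_of_rho_lt (x y : ℤ → A) (l : ℕ)
    (h : rho x y < 2 ^ (-(l : ℤ))) : ∀ j : ℤ, j.natAbs ≤ l → x j = y j := by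
  intro j hj
  by_cases hxy : x = y
  · rw [hxy]
  · unfold rho at h
    rw [if_neg hxy] at h
    have h2 := (zpow_lt_zpow_iff_right₀ (one_lt_two (α := ℝ))).mp h
    by_contra hc
    have h3 : sInf {n : ℕ | ∃ i : ℤ, i.natAbs = n ∧ x i ≠ y i} ≤ j.natAbs :=
      Nat.sInf_le ⟨j, rfl, hc⟩
    omega

lemma shiftZ_mem {Sig : Set (ℤ → A)} (hS : shift '' Sig = Sig) {q : ℤ → A}
    (hq : q ∈ Sig) (k : ℤ) : (fun m => q (m + k)) ∈ Sig := by
  induction k using Int.induction_on with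
  | zero => simpa using hq
  | succ k ih =>
    have he : (fun m => q (m + ((k : ℤ) + 1))) = shift (fun m => q (m + k)) := by
      funext m
      show q (m + ((k : ℤ) + 1)) = q (m + 1 + k)
      congr 1
      ring
    rw [he, ← hS]
    exact ⟨_, ih, rfl⟩
  | pred k ih =>
    rw [← hS] at ih
    obtain ⟨p, hp, hpe⟩ := ih
    have h1 : ∀ m : ℤ, p (m + 1) = q (m + -(k : ℤ)) := fun m => congrFun hpe m
    have he : (fun m => q (m + (-(k : ℤ) - 1))) = p := by
      funext m
      calc q (m + (-(k : ℤ) - 1)) = q ((m - 1) + -(k : ℤ)) := by congr 1; ring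
        _ = p (m - 1 + 1) := (h1 (m - 1)).symm
        _ = p m := by congr 1; ring
    rw [he]
    exact hp

lemma flatMap_cast_map {B : Type} (g : ℤ → B) (L : List ℕ) :
    List.map g (L.flatMap fun a => [((a : ℕ) : ℤ)]) = List.map (fun i : ℕ => g (i : ℤ)) L := by
  induction L with
  | nil => rfl
  | cons hd tl ih =>
    rw [List.flatMap_cons, List.singleton_append, List.map_cons, List.map_cons, ih]

lemma central_eq (x : ℤ → A) (l : ℕ) :
    central x l = (List.range (2 * l + 1)).map (fun i : ℕ => x ((i : ℤ) - l)) := by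
  unfold central
  exact flatMap_cast_map _ _

lemma central_length (x : ℤ → A) (l : ℕ) : (central x l).length = 2 * l + 1 := by
  rw [central_eq, List.length_map, List.length_range]

lemma central_getElem (x : ℤ → A) (l : ℕ) (i : ℕ) (h : i < (central x l).length) :
    (central x l)[i] = x ((i : ℤ) - l) := by
  simp only [central_eq, List.getElem_map, List.getElem_range]

end Helpers

theorem stmt4 {A : Type} (Sig : Set (ℤ → A)) (hS : IsSubshift Sig)
    (x y : ℤ → A) (hx : x ∈ Sig) (hy : y ∈ Sig) :
    ChainRel Sig x y ↔
      ∀ l : ℕ, ∃ n : ℕ, 0 < n ∧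
        ∃ w : List A, ChainWord (lang Sig) (central x l) (central y l) n w := by
  constructor
  · -- forward direction
    intro hcr l
    have hε : (0:ℝ) < 2 ^ (-(l : ℤ)) := by positivity
    obtain ⟨n, hn, z, hz0, hzn, hmem, hstep⟩ := hcr _ hε
    have hag : ∀ i < n, ∀ m : ℤ, m.natAbs ≤ l → z i (m + 1) = z (i + 1) m := fun i hi m hm =>
      agree_of_rho_lt _ _ _ (hstep i hi) m hm
    have key : ∀ i₁ i₂ : ℕ, i₁ ≤ i₂ → i₂ ≤ n → ∀ j : ℤ, (i₂ : ℤ) ≤ j → j ≤ (i₁ : ℤ) + 2 * l →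
        z i₁ (j - l - i₁) = z i₂ (j - l - i₂) := by
      intro i₁ i₂ h12
      induction i₂, h12 using Nat.le_induction with
      | base => intro _ _ _ _; rfl
      | succ i₂ h12 ih =>
        intro h2n j hj1 hj2
        rw [ih (by omega) j (by omega) hj2]
        have h3 := hag i₂ (by omega) (j - l - i₂ - 1) (by omega)
        have e2 : j - (l : ℤ) - i₂ - 1 + 1 = j - l - i₂ := by ring
        rw [e2] at h3
        rw [h3]
        congr 1
        push_cast
        ring
    set F : ℕ → A := fun j => z (min j n) ((j : ℤ) - (l : ℤ) - ((min j n : ℕ) : ℤ)) with hF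
    set w : List A := (List.range (n + (2 * l + 1))).map F with hwdef
    have hwlen : w.length = n + (2 * l + 1) := by simp [hwdef]
    have hval : ∀ (j : ℕ) (hj : j < w.length) (i : ℕ), i ≤ n → (i : ℤ) ≤ j →
        (j : ℤ) ≤ i + 2 * l → w[j] = z i ((j : ℤ) - l - i) := by
      intro j hj i hin h1 h2
      have hkey := key i (min j n) (by omega) (min_le_right _ _) j (by push_cast; omega) h2
      have hg : w[j] = F j := by simp [hwdef]
      rw [hg, hF]
      exact hkey.symm
    have htake : w.take (2 * l + 1) = central x l := by
      apply List.ext_getElem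
      · simp [central_length, hwlen]
      · intro i h1 h2
        rw [central_length] at h2
        rw [List.getElem_take, central_getElem,
          hval i (by omega) 0 (by omega) (by omega) (by push_cast; omega), ← hz0]
        congr 1
        push_cast
        ring
    have hdrop : w.drop n = central y l := by
      apply List.ext_getElem
      · simp [central_length, hwlen]
      · intro i h1 h2
        rw [central_length] at h2
        rw [List.getElem_drop, central_getElem,
          hval (n + i) (by omega) n le_rfl (by push_cast; omega) (by push_cast; omega), ← hzn]
        congr 1
        push_cast
        ring
    refine ⟨n, hn, w, ?_, ?_, ?_, ?_, ?_⟩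
    · simp [central_length]
    · rw [central_length, hwlen]
    · rw [central_length]
      exact htake
    · exact hdrop
    · intro u hinf hulen
      rw [central_length] at hulen
      obtain ⟨s, t, hst⟩ := hinf
      have hd : w.drop s.length = u ++ t := by
        rw [← hst, List.append_assoc, List.drop_left]
      have hlen2 : s.length + u.length + t.length = n + (2 * l + 1) := by
        have := congrArg List.length hst
        simp [hwlen] at this
        omega
      refine ⟨z (min s.length n), hmem _ (min_le_right _ _),
        (s.length : ℤ) - l - ((min s.length n : ℕ) : ℤ), ?_⟩
      intro j hj
      have hj1 : s.length + j < w.length := by omega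
      have hj2 : j < (w.drop s.length).length := by simp [hwlen]; omega
      have h4 : j < (u ++ t).length := by simp; omega
      have e1 : u[j] = w[s.length + j] := by
        calc u[j] = (u ++ t)[j] := (List.getElem_append_left hj).symm
          _ = (w.drop s.length)[j] := List.getElem_of_eq hd.symm h4
          _ = w[s.length + j] := List.getElem_drop ..
      rw [List.get_eq_getElem, e1,
        hval (s.length + j) hj1 (min s.length n) (min_le_right _ _) (by push_cast; omega)
          (by push_cast; omega)]
      congr 1
      push_cast
      ring
  · -- backward direction
    intro hch ε hε
    obtain ⟨l, hl⟩ : ∃ l : ℕ, (2:ℝ) ^ (-(l : ℤ)) < ε := by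
      obtain ⟨l, hl⟩ := exists_pow_lt_of_lt_one hε (by norm_num : (1:ℝ)/2 < 1)
      exact ⟨l, by rwa [zpow_neg, zpow_natCast, ← inv_pow, ← one_div]⟩
    obtain ⟨n, hn, w, hu, hwlen, htake, hdrop, hfac⟩ := hch l
    rw [central_length] at hwlen htake
    have hWx : ∀ m : ℤ, m.natAbs ≤ l → w.getD ((l : ℤ) + m).toNat (x 0) = x m := by
      intro m hm
      have h2 : ((l : ℤ) + m).toNat < w.length := by omega
      have h3 : ((l : ℤ) + m).toNat < (w.take (2 * l + 1)).length := by simp [hwlen]; omega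
      rw [List.getD_eq_getElem _ _ h2, ← List.getElem_take (h := h3),
        List.getElem_of_eq htake h3, central_getElem]
      congr 1
      omega
    have hWy : ∀ m : ℤ, m.natAbs ≤ l → w.getD (n + ((l : ℤ) + m).toNat) (x 0) = y m := by
      intro m hm
      have h2 : n + ((l : ℤ) + m).toNat < w.length := by omega
      have h3 : ((l : ℤ) + m).toNat < (w.drop n).length := by simp [hwlen]; omega
      rw [List.getD_eq_getElem _ _ h2, ← List.getElem_drop (h := h3),
        List.getElem_of_eq hdrop h3, central_getElem]
      congr 1
      omega
    have H : ∀ i : ℕ, ∃ p : ℤ → A, p ∈ Sig ∧ (i ≤ n → ∀ m : ℤ, m.natAbs ≤ l →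
        p m = w.getD (i + ((l : ℤ) + m).toNat) (x 0)) := by
      intro i
      by_cases hin : i ≤ n
      · have hinf : (w.drop i).take (2 * l + 1) <:+: w :=
          (List.take_prefix _ _).isInfix.trans (List.drop_suffix _ _).isInfix
        obtain ⟨q, hq, k, hk⟩ := hfac _ hinf (by rw [central_length]; simp)
        refine ⟨fun m => q (m + (k + l)), shiftZ_mem hS.2 hq (k + l), fun _ m hm => ?_⟩
        have hj : ((l : ℤ) + m).toNat < ((w.drop i).take (2 * l + 1)).length := by
          simp [hwlen]; omega
        have hk2 := hk ((l : ℤ) + m).toNat hj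
        rw [List.get_eq_getElem, List.getElem_take, List.getElem_drop] at hk2
        have h2 : i + ((l : ℤ) + m).toNat < w.length := by omega
        rw [List.getD_eq_getElem _ _ h2, hk2]
        show q (m + (k + l)) = q (k + ((l : ℤ) + m).toNat)
        congr 1
        omega
      · exact ⟨x, hx, fun h => absurd h hin⟩
    choose p hp hpv using H
    set z : ℕ → ℤ → A := fun i => if i = 0 then x else if i = n then y else p i with hzdef
    have K : ∀ i : ℕ, i ≤ n → ∀ m : ℤ, m.natAbs ≤ l →
        z i m = w.getD (i + ((l : ℤ) + m).toNat) (x 0) := by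
      intro i hin m hm
      rcases eq_or_ne i 0 with h0 | h0
      · subst h0
        simp only [hzdef, if_pos rfl]
        simpa using (hWx m hm).symm
      rcases eq_or_ne i n with hIn | hIn
      · subst hIn
        simp only [hzdef, if_neg h0, if_pos rfl]
        exact (hWy m hm).symm
      · simp only [hzdef, if_neg h0, if_neg hIn]
        exact hpv i hin m hm
    have hn0 : n ≠ 0 := by omega
    refine ⟨n, hn, z, by simp [hzdef], by simp [hzdef, hn0], ?_, ?_⟩
    · intro i hi
      simp only [hzdef]
      split
      · exact hx
      · split
        · exact hy
        · exact hp i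
    · intro i hi
      refine lt_of_le_of_lt ?_ hl
      apply rho_le_of_agree
      intro m hm
      have e1 : shift (z i) m = z i (m + 1) := rfl
      rw [e1, K i (by omega) (m + 1) (by omega), K (i + 1) (by omega) m (by omega)]
      have e2 : i + ((l : ℤ) + (m + 1)).toNat = (i + 1) + ((l : ℤ) + m).toNat := by omega
      rw [e2]
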